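/- Let V = ℝ^{2n} with standard symplectic form ω. If W₁ and W₂ are subspaces of V with dim W₁ = dim W₂ and dim(W₁ ∩ W₁^⊥) = dim(W₂ ∩ W₂^⊥), then there exists h ∈ Sp(V,ω) such that h(W₁) = W₂. In other words, the symplectic group acts transitively on subspaces of fixed dimension and fixed symplectic rank. -/

import Mathlib

open Module Submodule LinearMap.BilinForm
open LinearMap (BilinForm)

/-- The standard symplectic form `ω` on `V = ℝ^{2n}`. -/
noncomputable def stdSymplectic (n : ℕ) :
    LinearMap.BilinForm ℝ ((Fin n ⊕ Fin n) → ℝ) :=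
  Matrix.toBilin' (Matrix.fromBlocks 0 1 (-1) 0)



lemma std_apply (n : ℕ) (x y : (Fin n ⊕ Fin n) → ℝ) :
    stdSymplectic n x y = ∑ i, (x (Sum.inl i) * y (Sum.inr i) - x (Sum.inr i) * y (Sum.inl i)) := by
  simp [stdSymplectic, Matrix.toBilin'_apply', dotProduct, Matrix.mulVec,
    Matrix.fromBlocks, Fintype.sum_sum_type, Matrix.one_apply, Finset.mul_sum,
    Finset.sum_sub_distrib, mul_comm, sub_eq_add_neg, Finset.sum_add_distrib, Finset.sum_neg_distrib]

lemma std_isAlt (n : ℕ) : (stdSymplectic n).IsAlt := by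
  intro x; rw [std_apply]; simp [mul_comm]

lemma std_nondeg (n : ℕ) : (stdSymplectic n).Nondegenerate := by
  refine (std_isAlt n).isRefl.nondegenerate_iff_separatingLeft.mpr ?_
  intro x hx
  funext i
  rcases i with i | i
  · have := hx (Pi.single (Sum.inr i) 1)
    rw [std_apply] at this
    simpa [Pi.single_apply, Finset.sum_ite_eq'] using this
  · have := hx (Pi.single (Sum.inl i) 1)
    rw [std_apply] at this
    simpa [Pi.single_apply, Finset.sum_ite_eq'] using this


variable {V : Type*} [AddCommGroup V] [Module ℝ V]

lemma exists_pair (B : BilinForm ℝ V) (nd : B.Nondegenerate) {u : V} (hu : u ≠ 0) :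
    ∃ v, B u v = 1 := by
  have h : ¬ ∀ y, B u y = 0 := fun h => hu (nd.1 u h)
  push_neg at h
  obtain ⟨y, hy⟩ := h
  exact ⟨(B u y)⁻¹ • y, by rw [map_smul, smul_eq_mul, inv_mul_cancel₀ hy]⟩

lemma range_pair (u v : V) : Set.range ![u, v] = {u, v} := by
  ext z; simp [Fin.exists_fin_two]; tauto

lemma pair_li {B : BilinForm ℝ V} (alt : B.IsAlt) {u v : V} (huv : B u v = 1) :
    LinearIndependent ℝ ![u, v] := by
  rw [linearIndependent_fin2]
  refine ⟨?_, ?_⟩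
  · show v ≠ 0
    rintro rfl; simp at huv
  · show ∀ a : ℝ, a • v ≠ u
    intro a hav
    have : B u v = 0 := by
      rw [← hav]; simp [alt.self_eq_zero]
    rw [huv] at this; norm_num at this

lemma finrank_pair {B : BilinForm ℝ V} (alt : B.IsAlt) {u v : V} (huv : B u v = 1) :
    finrank ℝ (span ℝ ({u, v} : Set V)) = 2 := by
  rw [← range_pair u v, finrank_span_eq_card (pair_li alt huv)]
  simp

lemma mem_orth_pair {B : BilinForm ℝ V} {u v x : V} :
    x ∈ B.orthogonal (span ℝ {u, v}) ↔ B u x = 0 ∧ B v x = 0 := by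
  rw [mem_orthogonal_iff]
  constructor
  · intro h
    exact ⟨h u (subset_span (by simp)), h v (subset_span (by simp))⟩
  · rintro ⟨h1, h2⟩ n hn
    show B n x = 0
    induction hn using span_induction with
    | mem z hz =>
      rcases hz with rfl | rfl
      · exact h1
      · exact h2
    | zero => simp
    | add a b _ _ ha hb =>
      rw [map_add, LinearMap.add_apply, ha, hb, add_zero]
    | smul c a _ ha =>
      rw [map_smul, LinearMap.smul_apply, smul_eq_mul, ha, mul_zero]

lemma restrict_pair_nondeg {B : BilinForm ℝ V} (alt : B.IsAlt) {u v : V} (huv : B u v = 1) :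
    (B.restrict (span ℝ ({u, v} : Set V))).Nondegenerate := by
  have hr : (B.restrict (span ℝ ({u, v} : Set V))).IsRefl := fun x y h => alt.isRefl x y h
  refine hr.nondegenerate_iff_separatingLeft.mpr ?_
  rintro ⟨x, hx⟩ h
  obtain ⟨a, b, rfl⟩ := mem_span_pair.mp hx
  have h1 := h ⟨u, subset_span (by simp)⟩
  have h2 := h ⟨v, subset_span (by simp)⟩
  simp only [restrict_apply, LinearMap.domRestrict_apply, map_add, map_smul,
    LinearMap.add_apply, LinearMap.smul_apply, smul_eq_mul, alt.self_eq_zero, huv] at h1 h2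
  have hvu : B v u = -1 := by
    have h := alt.neg_eq u v; rw [huv] at h; linarith
  rw [hvu] at h1
  have ha : a = 0 := by linarith
  have hb : b = 0 := by linarith
  ext
  simp [ha, hb]

lemma expand {B : BilinForm ℝ V} (alt : B.IsAlt) {u v : V} (huv : B u v = 1)
    (a b c d : ℝ) {w w' : V}
    (hw : w ∈ B.orthogonal (span ℝ {u, v})) (hw' : w' ∈ B.orthogonal (span ℝ {u, v})) :
    B (a • u + b • v + w) (c • u + d • v + w') = a * d - b * c + B w w' := by
  obtain ⟨h1, h2⟩ := mem_orth_pair.mp hw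
  obtain ⟨h1', h2'⟩ := mem_orth_pair.mp hw'
  have hvu : B v u = -1 := by have h := alt.neg_eq u v; rw [huv] at h; linarith
  have hwu : B w u = 0 := by have := alt.neg_eq u w; rw [h1] at this; linarith
  have hwv : B w v = 0 := by have := alt.neg_eq v w; rw [h2] at this; linarith
  simp only [map_add, map_smul, LinearMap.add_apply, LinearMap.smul_apply, smul_eq_mul,
    alt.self_eq_zero, huv, hvu, h1', h2', hwu, hwv]
  ring

lemma build {V₁ V₂ : Type*} [AddCommGroup V₁] [Module ℝ V₁] [AddCommGroup V₂] [Module ℝ V₂]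
    {B₁ : BilinForm ℝ V₁} {B₂ : BilinForm ℝ V₂} (alt₁ : B₁.IsAlt)
    {u₁ v₁ : V₁} {u₂ v₂ : V₂} (huv₁ : B₁ u₁ v₁ = 1)
    (hc₁ : IsCompl (span ℝ {u₁, v₁}) (B₁.orthogonal (span ℝ {u₁, v₁})))
    (f : ↥(B₁.orthogonal (span ℝ {u₁, v₁})) →ₗ[ℝ] ↥(B₂.orthogonal (span ℝ {u₂, v₂}))) :
    ∃ G : V₁ →ₗ[ℝ] V₂, G u₁ = u₂ ∧ G v₁ = v₂ ∧
      (∀ w : ↥(B₁.orthogonal (span ℝ {u₁, v₁})), G w = f w) := by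
  have hu₁ : u₁ ∈ span ℝ ({u₁, v₁} : Set V₁) := subset_span (by simp)
  have hv₁ : v₁ ∈ span ℝ ({u₁, v₁} : Set V₁) := subset_span (by simp)
  let π₁ : V₁ →ₗ[ℝ] ↥(B₁.orthogonal (span ℝ {u₁, v₁})) :=
    (B₁.orthogonal (span ℝ {u₁, v₁})).linearProjOfIsCompl _ hc₁.symm
  refine ⟨(LinearMap.toSpanSingleton ℝ V₂ u₂).comp (B₁.flip v₁) +
      (LinearMap.toSpanSingleton ℝ V₂ v₂).comp (B₁ u₁) +
      (B₂.orthogonal (span ℝ {u₂, v₂})).subtype ∘ₗ f ∘ₗ π₁, ?_, ?_, ?_⟩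
  · have hπ : π₁ u₁ = 0 := linearProjOfIsCompl_apply_right hc₁.symm ⟨u₁, hu₁⟩
    simp [π₁, hπ, huv₁, alt₁.self_eq_zero, LinearMap.toSpanSingleton_apply]
  · have hπ : π₁ v₁ = 0 := linearProjOfIsCompl_apply_right hc₁.symm ⟨v₁, hv₁⟩
    have hvu : B₁ v₁ v₁ = 0 := alt₁.self_eq_zero v₁
    simp [π₁, hπ, huv₁, alt₁.self_eq_zero, hvu, LinearMap.toSpanSingleton_apply]
  · intro w
    have hπ : π₁ (w : V₁) = w := linearProjOfIsCompl_apply_left hc₁.symm w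
    obtain ⟨h1, h2⟩ := mem_orth_pair.mp w.2
    have hwv : B₁ (w : V₁) v₁ = 0 := by have := alt₁.neg_eq v₁ (w : V₁); rw [h2] at this; linarith
    simp [π₁, hπ, hwv, h1, LinearMap.toSpanSingleton_apply]

lemma combine {V₁ V₂ : Type*} [AddCommGroup V₁] [Module ℝ V₁] [AddCommGroup V₂] [Module ℝ V₂]
    {B₁ : BilinForm ℝ V₁} {B₂ : BilinForm ℝ V₂} (alt₁ : B₁.IsAlt) (alt₂ : B₂.IsAlt)
    {u₁ v₁ : V₁} {u₂ v₂ : V₂} (huv₁ : B₁ u₁ v₁ = 1) (huv₂ : B₂ u₂ v₂ = 1)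
    (hc₁ : IsCompl (span ℝ {u₁, v₁}) (B₁.orthogonal (span ℝ {u₁, v₁})))
    (hc₂ : IsCompl (span ℝ {u₂, v₂}) (B₂.orthogonal (span ℝ {u₂, v₂})))
    (f : ↥(B₁.orthogonal (span ℝ {u₁, v₁})) ≃ₗ[ℝ] ↥(B₂.orthogonal (span ℝ {u₂, v₂})))
    (hf : ∀ x y, B₂ (f x) (f y) = B₁ (x : V₁) (y : V₁)) :
    ∃ g : V₁ ≃ₗ[ℝ] V₂, (∀ x y, B₂ (g x) (g y) = B₁ x y) ∧ g u₁ = u₂ ∧ g v₁ = v₂ ∧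
      (∀ w : ↥(B₁.orthogonal (span ℝ {u₁, v₁})), g w = f w) := by
  obtain ⟨G, hGu, hGv, hGw⟩ := build alt₁ huv₁ hc₁ f.toLinearMap
  obtain ⟨G', hG'u, hG'v, hG'w⟩ := build alt₂ huv₂ hc₂ f.symm.toLinearMap
  simp only [LinearEquiv.coe_coe] at hGw hG'w
  have hdec₁ : ∀ x : V₁, ∃ (a b : ℝ) (w : ↥(B₁.orthogonal (span ℝ {u₁, v₁}))),
      x = a • u₁ + b • v₁ + (w : V₁) := by
    intro x
    have hx : x ∈ span ℝ ({u₁, v₁} : Set V₁) ⊔ B₁.orthogonal (span ℝ {u₁, v₁}) := by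
      rw [hc₁.sup_eq_top]; trivial
    obtain ⟨p, hp, q, hq, rfl⟩ := mem_sup.mp hx
    obtain ⟨a, b, rfl⟩ := mem_span_pair.mp hp
    exact ⟨a, b, ⟨q, hq⟩, rfl⟩
  have hG : ∀ (a b : ℝ) (w : ↥(B₁.orthogonal (span ℝ {u₁, v₁}))),
      G (a • u₁ + b • v₁ + (w : V₁)) = a • u₂ + b • v₂ + ((f w : _) : V₂) := by
    intro a b w
    simp [map_add, map_smul, hGu, hGv, hGw]
  have hGG' : ∀ x, G' (G x) = x := by
    intro x
    obtain ⟨a, b, w, rfl⟩ := hdec₁ x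
    rw [hG]
    have : G' ((a • u₂ + b • v₂) + ((f w : _) : V₂)) =
        a • G' u₂ + b • G' v₂ + G' ((f w : _) : V₂) := by
      simp [map_add, map_smul]
    rw [this, hG'u, hG'v, hG'w (f w)]
    simp
  have hdec₂ : ∀ x : V₂, ∃ (a b : ℝ) (w : ↥(B₂.orthogonal (span ℝ {u₂, v₂}))),
      x = a • u₂ + b • v₂ + (w : V₂) := by
    intro x
    have hx : x ∈ span ℝ ({u₂, v₂} : Set V₂) ⊔ B₂.orthogonal (span ℝ {u₂, v₂}) := by
      rw [hc₂.sup_eq_top]; trivial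
    obtain ⟨p, hp, q, hq, rfl⟩ := mem_sup.mp hx
    obtain ⟨a, b, rfl⟩ := mem_span_pair.mp hp
    exact ⟨a, b, ⟨q, hq⟩, rfl⟩
  have hG'G : ∀ x, G (G' x) = x := by
    intro x
    obtain ⟨a, b, w, rfl⟩ := hdec₂ x
    have : G' ((a • u₂ + b • v₂) + (w : V₂)) =
        a • G' u₂ + b • G' v₂ + G' (w : V₂) := by
      simp [map_add, map_smul]
    rw [this, hG'u, hG'v, hG'w w]
    have : G ((a • u₁ + b • v₁) + ((f.symm w : _) : V₁)) =
        a • G u₁ + b • G v₁ + G ((f.symm w : _) : V₁) := by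
      simp [map_add, map_smul]
    rw [this, hGu, hGv, hGw (f.symm w)]
    simp
  refine ⟨LinearEquiv.ofLinear G G' (by ext x; simp [hG'G x]) (by ext x; simp [hGG' x]),
    ?_, ?_, ?_, ?_⟩
  · intro x y
    obtain ⟨a, b, w, rfl⟩ := hdec₁ x
    obtain ⟨c, d, w', rfl⟩ := hdec₁ y
    show B₂ (G _) (G _) = _
    rw [hG, hG, expand alt₂ huv₂ a b c d (f w).2 (f w').2,
      expand alt₁ huv₁ a b c d w.2 w'.2, hf]
  · exact hGu
  · exact hGv
  · exact hGw

/-- decomposition when both u,v ∈ W -/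
lemma decomp_top {B : BilinForm ℝ V} (alt : B.IsAlt) {u v : V} (huv : B u v = 1)
    {W : Submodule ℝ V} (hu : u ∈ W) (hv : v ∈ W) :
    W = span ℝ {u, v} ⊔ (W ⊓ B.orthogonal (span ℝ {u, v})) := by
  have hvu : B v u = -1 := by have h := alt.neg_eq u v; rw [huv] at h; linarith
  apply le_antisymm
  · intro w hw
    have hp : B w v • u + B u w • v ∈ span ℝ ({u, v} : Set V) :=
      mem_span_pair.mpr ⟨_, _, rfl⟩
    have hpW : B w v • u + B u w • v ∈ W := add_mem (smul_mem _ _ hu) (smul_mem _ _ hv)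
    have hq : w - (B w v • u + B u w • v) ∈ B.orthogonal (span ℝ {u, v}) := by
      rw [mem_orth_pair]
      constructor
      · simp [map_sub, map_add, map_smul, alt.self_eq_zero, huv]
      · simp only [map_sub, map_add, map_smul, smul_eq_mul, alt.self_eq_zero, hvu]
        have := alt.neg_eq w v
        linarith
    refine mem_sup.mpr ⟨_, hp, _, mem_inf.mpr ⟨sub_mem hw hpW, hq⟩, by abel⟩
  · refine sup_le (span_le.mpr ?_) inf_le_left
    rintro z (rfl | rfl) <;> simpa
/-- decomposition when u ∈ W and W isotropic -/
lemma decomp_iso {B : BilinForm ℝ V} (alt : B.IsAlt) {u v : V} (huv : B u v = 1)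
    {W : Submodule ℝ V} (hu : u ∈ W) (hiso : W ≤ B.orthogonal W) :
    W = span ℝ {u} ⊔ (W ⊓ B.orthogonal (span ℝ {u, v})) := by
  have hvu : B v u = -1 := by have h := alt.neg_eq u v; rw [huv] at h; linarith
  apply le_antisymm
  · intro w hw
    have hBuw : B u w = 0 := by
      have h1 : ∀ n ∈ W, B n u = 0 := fun n hn => (hiso hu) n hn
      have := alt.neg_eq w u
      rw [h1 w hw] at this
      linarith
    have hp : B w v • u ∈ span ℝ ({u} : Set V) := smul_mem _ _ (mem_span_singleton_self u)
    have hpW : B w v • u ∈ W := smul_mem _ _ hu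
    have hq : w - B w v • u ∈ B.orthogonal (span ℝ {u, v}) := by
      rw [mem_orth_pair]
      constructor
      · simp [map_sub, map_smul, alt.self_eq_zero, hBuw]
      · simp only [map_sub, map_smul, smul_eq_mul, hvu]
        have := alt.neg_eq w v
        linarith
    refine mem_sup.mpr ⟨_, hp, _, mem_inf.mpr ⟨sub_mem hw hpW, hq⟩, by abel⟩
  · refine sup_le (span_le.mpr ?_) inf_le_left
    rintro z rfl; simpa

lemma rad_le_orthP {B : BilinForm ℝ V} {u v : V}
    {W : Submodule ℝ V} (hu : u ∈ W) (hv : v ∈ W) :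
    W ⊓ B.orthogonal W ≤ B.orthogonal (span ℝ {u, v}) :=
  le_trans inf_le_right (orthogonal_le (span_le.mpr (by rintro z (rfl | rfl) <;> simpa)))

/-- radical transfers to the orthogonal complement of the hyperbolic pair -/
lemma rad_comap {B : BilinForm ℝ V} (alt : B.IsAlt) {u v : V} (huv : B u v = 1)
    {W : Submodule ℝ V} (hu : u ∈ W) (hv : v ∈ W) :
    (comap (B.orthogonal (span ℝ {u, v})).subtype (W ⊓ B.orthogonal (span ℝ {u, v}))) ⊓
      (B.restrict (B.orthogonal (span ℝ {u, v}))).orthogonal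
        (comap (B.orthogonal (span ℝ {u, v})).subtype (W ⊓ B.orthogonal (span ℝ {u, v})))
      = comap (B.orthogonal (span ℝ {u, v})).subtype (W ⊓ B.orthogonal W) := by
  ext x
  obtain ⟨x, hxQ⟩ := x
  constructor
  · intro hx
    obtain ⟨hx1, horth⟩ := mem_inf.mp hx
    have hxW : x ∈ W := (mem_inf.mp (mem_comap.mp hx1)).1
    refine mem_comap.mpr (mem_inf.mpr ⟨hxW, mem_orthogonal_iff.mpr fun n hn => ?_⟩)
    show B n x = 0
    rw [decomp_top alt huv hu hv] at hn
    obtain ⟨p, hp, m, hm, rfl⟩ := mem_sup.mp hn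
    have hpx : B p x = 0 := mem_orthogonal_iff.mp hxQ p hp
    have hmx : B m x = 0 :=
      mem_orthogonal_iff.mp horth ⟨m, (mem_inf.mp hm).2⟩ (mem_comap.mpr hm)
    rw [map_add, LinearMap.add_apply, hpx, hmx, add_zero]
  · intro hx
    have hxW : x ∈ W := (mem_inf.mp (mem_comap.mp hx)).1
    have hxR : x ∈ B.orthogonal W := (mem_inf.mp (mem_comap.mp hx)).2
    refine mem_inf.mpr ⟨mem_comap.mpr (mem_inf.mpr ⟨hxW, hxQ⟩), mem_orthogonal_iff.mpr ?_⟩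
    rintro ⟨n, hnQ⟩ hn
    show B n x = 0
    exact mem_orthogonal_iff.mp hxR n (mem_inf.mp (mem_comap.mp hn)).1

/-- in the isotropic case the sub-subspace remains isotropic for the restricted form -/
lemma iso_restrict {B : BilinForm ℝ V} {P : Submodule ℝ V}
    {W : Submodule ℝ V} (hiso : W ≤ B.orthogonal W) :
    (comap (B.orthogonal P).subtype (W ⊓ B.orthogonal P)) ⊓
      (B.restrict (B.orthogonal P)).orthogonal
        (comap (B.orthogonal P).subtype (W ⊓ B.orthogonal P))
      = comap (B.orthogonal P).subtype (W ⊓ B.orthogonal P) := by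
  rw [inf_eq_left]
  rintro ⟨x, hxQ⟩ hx
  simp only [mem_comap, coe_subtype, mem_inf] at hx
  rw [mem_orthogonal_iff]
  rintro ⟨n, hnQ⟩ hn
  simp only [mem_comap, coe_subtype, mem_inf] at hn
  show B n x = 0
  exact (hiso hx.1) n hn.1

/-- transporting the map property through inclusions -/
lemma map_of_le {V₁ V₂ : Type*} [AddCommGroup V₁] [Module ℝ V₁] [AddCommGroup V₂] [Module ℝ V₂]
    (g : V₁ →ₗ[ℝ] V₂) {Q₁ : Submodule ℝ V₁} {Q₂ : Submodule ℝ V₂} (f : ↥Q₁ →ₗ[ℝ] ↥Q₂)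
    (hg : ∀ w : ↥Q₁, g w = f w) {W : Submodule ℝ V₁} (hW : W ≤ Q₁) :
    W.map g = map Q₂.subtype (map f (comap Q₁.subtype W)) := by
  ext y
  simp only [mem_map, mem_comap, coe_subtype]
  constructor
  · rintro ⟨x, hx, rfl⟩
    exact ⟨f ⟨x, hW hx⟩, ⟨⟨x, hW hx⟩, hx, rfl⟩, (hg ⟨x, hW hx⟩).symm⟩
  · rintro ⟨z, ⟨x, hx, rfl⟩, rfl⟩
    exact ⟨x, hx, hg x⟩

lemma setup [FiniteDimensional ℝ V] {B : BilinForm ℝ V} (alt : B.IsAlt) (nd : B.Nondegenerate)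
    {u v : V} (huv : B u v = 1) :
    IsCompl (span ℝ {u, v}) (B.orthogonal (span ℝ {u, v}))
    ∧ (B.restrict (B.orthogonal (span ℝ {u, v}))).Nondegenerate
    ∧ (B.restrict (B.orthogonal (span ℝ {u, v}))).IsAlt
    ∧ finrank ℝ ↥(B.orthogonal (span ℝ {u, v})) = finrank ℝ V - 2 := by
  have hc : IsCompl (span ℝ ({u, v} : Set V)) (B.orthogonal (span ℝ {u, v})) :=
    isCompl_orthogonal_of_restrict_nondegenerate alt.isRefl (restrict_pair_nondeg alt huv)
  refine ⟨hc, ?_, ?_, ?_⟩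
  · apply nondegenerate_restrict_of_disjoint_orthogonal B alt.isRefl
    rw [orthogonal_orthogonal nd alt.isRefl]
    exact hc.disjoint.symm
  · intro x
    exact alt.self_eq_zero (x : V)
  · rw [finrank_orthogonal nd, finrank_pair alt huv]

lemma glue {V₁ V₂ : Type*} [AddCommGroup V₁] [Module ℝ V₁] [AddCommGroup V₂] [Module ℝ V₂]
    {B₁ : BilinForm ℝ V₁} {B₂ : BilinForm ℝ V₂} (alt₁ : B₁.IsAlt) (alt₂ : B₂.IsAlt)
    {u₁ v₁ : V₁} {u₂ v₂ : V₂} (huv₁ : B₁ u₁ v₁ = 1) (huv₂ : B₂ u₂ v₂ = 1)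
    (hc₁ : IsCompl (span ℝ {u₁, v₁}) (B₁.orthogonal (span ℝ {u₁, v₁})))
    (hc₂ : IsCompl (span ℝ {u₂, v₂}) (B₂.orthogonal (span ℝ {u₂, v₂})))
    (f : ↥(B₁.orthogonal (span ℝ {u₁, v₁})) ≃ₗ[ℝ] ↥(B₂.orthogonal (span ℝ {u₂, v₂})))
    (hf : ∀ x y, B₂ (f x) (f y) = B₁ (x : V₁) (y : V₁))
    {W₁ : Submodule ℝ V₁} {W₂ : Submodule ℝ V₂}
    (hfmap : map (f : _ →ₗ[ℝ] _) (comap (B₁.orthogonal (span ℝ {u₁, v₁})).subtype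
        (W₁ ⊓ B₁.orthogonal (span ℝ {u₁, v₁})))
      = comap (B₂.orthogonal (span ℝ {u₂, v₂})).subtype (W₂ ⊓ B₂.orthogonal (span ℝ {u₂, v₂})))
    {A₁ : Submodule ℝ V₁} {A₂ : Submodule ℝ V₂}
    (hW₁ : W₁ = A₁ ⊔ (W₁ ⊓ B₁.orthogonal (span ℝ {u₁, v₁})))
    (hW₂ : W₂ = A₂ ⊔ (W₂ ⊓ B₂.orthogonal (span ℝ {u₂, v₂})))
    (hA : ∀ g : V₁ ≃ₗ[ℝ] V₂, g u₁ = u₂ → g v₁ = v₂ → map (g : V₁ →ₗ[ℝ] V₂) A₁ = A₂) :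
    ∃ g : V₁ ≃ₗ[ℝ] V₂, (∀ x y, B₂ (g x) (g y) = B₁ x y) ∧ W₁.map (g : V₁ →ₗ[ℝ] V₂) = W₂ := by
  obtain ⟨g, hpres, hgu, hgv, hgw⟩ := combine alt₁ alt₂ huv₁ huv₂ hc₁ hc₂ f hf
  refine ⟨g, hpres, ?_⟩
  have h1 : map (g : V₁ →ₗ[ℝ] V₂) (W₁ ⊓ B₁.orthogonal (span ℝ {u₁, v₁}))
      = W₂ ⊓ B₂.orthogonal (span ℝ {u₂, v₂}) := by
    rw [map_of_le (g : V₁ →ₗ[ℝ] V₂) f.toLinearMap (fun w => hgw w) inf_le_right, hfmap,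
      map_comap_subtype]
    rw [inf_eq_right]; exact inf_le_right
  conv_lhs => rw [hW₁]
  rw [Submodule.map_sup, h1, hA g hgu hgv, ← hW₂]

/-- find a hyperbolic pair inside a non-isotropic subspace -/
lemma pair_in {V : Type*} [AddCommGroup V] [Module ℝ V] {B : BilinForm ℝ V} {W : Submodule ℝ V}
    (hne : ¬ W ≤ B.orthogonal W) : ∃ u ∈ W, ∃ v ∈ W, B u v = 1 := by
  obtain ⟨x, hxW, hxn⟩ := SetLike.not_le_iff_exists.mp hne
  have h : ¬ ∀ n ∈ W, B n x = 0 := fun h => hxn (mem_orthogonal_iff.mpr h)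
  push_neg at h
  obtain ⟨y, hyW, hyx⟩ := h
  exact ⟨y, hyW, (B y x)⁻¹ • x, smul_mem _ _ hxW,
    by rw [map_smul, smul_eq_mul, inv_mul_cancel₀ hyx]⟩

theorem witt : ∀ (N : ℕ) (V₁ V₂ : Type) [AddCommGroup V₁] [AddCommGroup V₂]
    [Module ℝ V₁] [Module ℝ V₂] [FiniteDimensional ℝ V₁] [FiniteDimensional ℝ V₂]
    (B₁ : BilinForm ℝ V₁) (B₂ : BilinForm ℝ V₂),
    B₁.IsAlt → B₂.IsAlt → B₁.Nondegenerate → B₂.Nondegenerate →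
    finrank ℝ V₁ = N → finrank ℝ V₂ = N →
    ∀ (W₁ : Submodule ℝ V₁) (W₂ : Submodule ℝ V₂),
    finrank ℝ ↥W₁ = finrank ℝ ↥W₂ →
    finrank ℝ ↥(W₁ ⊓ B₁.orthogonal W₁) = finrank ℝ ↥(W₂ ⊓ B₂.orthogonal W₂) →
    ∃ g : V₁ ≃ₗ[ℝ] V₂, (∀ x y, B₂ (g x) (g y) = B₁ x y) ∧
      W₁.map (g : V₁ →ₗ[ℝ] V₂) = W₂ := by
  intro N
  induction N using Nat.strong_induction_on with
  | _ N IH =>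
  intro V₁ V₂ _ _ _ _ _ _ B₁ B₂ alt₁ alt₂ nd₁ nd₂ hN₁ hN₂ W₁ W₂ hdim hrk
  by_cases h0 : finrank ℝ ↥W₁ = 0
  · -- W₁ = ⊥, W₂ = ⊥
    have hW₁b : W₁ = ⊥ := (Submodule.finrank_eq_zero (R := ℝ) (M := V₁)).mp h0
    have hW₂b : W₂ = ⊥ := (Submodule.finrank_eq_zero (R := ℝ) (M := V₂)).mp (hdim ▸ h0)
    subst hW₁b hW₂b
    by_cases hN0 : N = 0
    · have hs₁ : Subsingleton V₁ := (finrank_zero_iff (R := ℝ)).mp (by omega)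
      have hs₂ : Subsingleton V₂ := (finrank_zero_iff (R := ℝ)).mp (by omega)
      refine ⟨LinearEquiv.ofFinrankEq V₁ V₂ (by omega), fun x y => ?_, by simp⟩
      rw [Subsingleton.elim x 0, Subsingleton.elim y 0]
      simp
    · have hnt : Nontrivial V₁ := (finrank_pos_iff (R := ℝ)).mp (by omega)
      have hnt₂ : Nontrivial V₂ := (finrank_pos_iff (R := ℝ)).mp (by omega)
      obtain ⟨u₁, hu₁0⟩ := exists_ne (0 : V₁)
      obtain ⟨v₁, huv₁⟩ := exists_pair B₁ nd₁ hu₁0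
      obtain ⟨u₂, hu₂0⟩ := exists_ne (0 : V₂)
      obtain ⟨v₂, huv₂⟩ := exists_pair B₂ nd₂ hu₂0
      obtain ⟨hc₁, Qnd₁, Qalt₁, Qrk₁⟩ := setup alt₁ nd₁ huv₁
      obtain ⟨hc₂, Qnd₂, Qalt₂, Qrk₂⟩ := setup alt₂ nd₂ huv₂
      obtain ⟨f, hf, -⟩ := IH (N - 2) (by omega) ↥(B₁.orthogonal (span ℝ {u₁, v₁}))
        ↥(B₂.orthogonal (span ℝ {u₂, v₂}))
        (B₁.restrict _) (B₂.restrict _) Qalt₁ Qalt₂ Qnd₁ Qnd₂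
        (by rw [Qrk₁, hN₁]) (by rw [Qrk₂, hN₂]) ⊥ ⊥
        (by rw [finrank_bot ℝ ↥(B₁.orthogonal (span ℝ {u₁, v₁})),
          finrank_bot ℝ ↥(B₂.orthogonal (span ℝ {u₂, v₂}))])
        (by rw [bot_inf_eq, bot_inf_eq,
          finrank_bot ℝ ↥(B₁.orthogonal (span ℝ {u₁, v₁})),
          finrank_bot ℝ ↥(B₂.orthogonal (span ℝ {u₂, v₂}))])
      obtain ⟨g, hpres, -, -, -⟩ := combine alt₁ alt₂ huv₁ huv₂ hc₁ hc₂ f hf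
      exact ⟨g, hpres, by simp⟩
  · have hlt₁N : 0 < finrank ℝ V₁ := lt_of_lt_of_le (by omega) (Submodule.finrank_le W₁)
    by_cases hiso : W₁ ≤ B₁.orthogonal W₁
    · -- isotropic case
      have hrad₁ : W₁ ⊓ B₁.orthogonal W₁ = W₁ := inf_eq_left.mpr hiso
      have hrad₂ : W₂ ⊓ B₂.orthogonal W₂ = W₂ := by
        apply Submodule.eq_of_le_of_finrank_le inf_le_left
        rw [← hdim, ← hrk, hrad₁]
      have hiso₂ : W₂ ≤ B₂.orthogonal W₂ := inf_eq_left.mp hrad₂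
      obtain ⟨u₁, hu₁W, hu₁0⟩ := Submodule.exists_mem_ne_zero_of_ne_bot
        (p := W₁) (by intro hb; rw [hb] at h0; simp at h0)
      obtain ⟨v₁, huv₁⟩ := exists_pair B₁ nd₁ hu₁0
      obtain ⟨u₂, hu₂W, hu₂0⟩ := Submodule.exists_mem_ne_zero_of_ne_bot
        (p := W₂) (by intro hb; rw [hb, finrank_bot ℝ V₂] at hdim; omega)
      obtain ⟨v₂, huv₂⟩ := exists_pair B₂ nd₂ hu₂0
      obtain ⟨hc₁, Qnd₁, Qalt₁, Qrk₁⟩ := setup alt₁ nd₁ huv₁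
      obtain ⟨hc₂, Qnd₂, Qalt₂, Qrk₂⟩ := setup alt₂ nd₂ huv₂
      have hdec₁ := decomp_iso alt₁ huv₁ hu₁W hiso
      have hdec₂ := decomp_iso alt₂ huv₂ hu₂W hiso₂
      -- dimension count
      have e₁ : finrank ℝ ↥W₁
          = 1 + finrank ℝ ↥(W₁ ⊓ B₁.orthogonal (span ℝ {u₁, v₁})) := by
        have h := Submodule.finrank_sup_add_finrank_inf_eq (span ℝ {u₁} : Submodule ℝ V₁)
          (W₁ ⊓ B₁.orthogonal (span ℝ {u₁, v₁}))
        have hb : (span ℝ {u₁} : Submodule ℝ V₁)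
            ⊓ (W₁ ⊓ B₁.orthogonal (span ℝ {u₁, v₁})) = ⊥ :=
          ((hc₁.disjoint.mono (span_mono (Set.singleton_subset_iff.mpr (Set.mem_insert _ _))) inf_le_right)).eq_bot
        rw [← hdec₁, hb, finrank_bot, add_zero, finrank_span_singleton hu₁0] at h
        omega
      have e₂ : finrank ℝ ↥W₂
          = 1 + finrank ℝ ↥(W₂ ⊓ B₂.orthogonal (span ℝ {u₂, v₂})) := by
        have h := Submodule.finrank_sup_add_finrank_inf_eq (span ℝ {u₂} : Submodule ℝ V₂)
          (W₂ ⊓ B₂.orthogonal (span ℝ {u₂, v₂}))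
        have hb : (span ℝ {u₂} : Submodule ℝ V₂)
            ⊓ (W₂ ⊓ B₂.orthogonal (span ℝ {u₂, v₂})) = ⊥ :=
          ((hc₂.disjoint.mono (span_mono (Set.singleton_subset_iff.mpr (Set.mem_insert _ _))) inf_le_right)).eq_bot
        rw [← hdec₂, hb, finrank_bot, add_zero, finrank_span_singleton hu₂0] at h
        omega
      have hdim'' : finrank ℝ ↥(comap (B₁.orthogonal (span ℝ {u₁, v₁})).subtype
            (W₁ ⊓ B₁.orthogonal (span ℝ {u₁, v₁})))
          = finrank ℝ ↥(comap (B₂.orthogonal (span ℝ {u₂, v₂})).subtype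
            (W₂ ⊓ B₂.orthogonal (span ℝ {u₂, v₂}))) := by
        rw [(comapSubtypeEquivOfLe (q := B₁.orthogonal (span ℝ {u₁, v₁}))
            (p := W₁ ⊓ B₁.orthogonal (span ℝ {u₁, v₁})) inf_le_right).finrank_eq,
          (comapSubtypeEquivOfLe (q := B₂.orthogonal (span ℝ {u₂, v₂}))
            (p := W₂ ⊓ B₂.orthogonal (span ℝ {u₂, v₂})) inf_le_right).finrank_eq]
        omega
      obtain ⟨f, hf, hfmap⟩ := IH (N - 2) (by omega) ↥(B₁.orthogonal (span ℝ {u₁, v₁}))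
        ↥(B₂.orthogonal (span ℝ {u₂, v₂}))
        (B₁.restrict _) (B₂.restrict _) Qalt₁ Qalt₂ Qnd₁ Qnd₂
        (by rw [Qrk₁, hN₁]) (by rw [Qrk₂, hN₂]) _ _ hdim''
        (by rw [iso_restrict hiso, iso_restrict hiso₂]; exact hdim'')
      refine glue alt₁ alt₂ huv₁ huv₂ hc₁ hc₂ f hf hfmap hdec₁ hdec₂ ?_
      intro g hgu hgv
      rw [Submodule.map_span, Set.image_singleton]
      simp only [LinearEquiv.coe_coe, hgu]
    · -- non-isotropic case
      have hiso₂ : ¬ W₂ ≤ B₂.orthogonal W₂ := by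
        intro h2
        apply hiso
        have hrad₂ : W₂ ⊓ B₂.orthogonal W₂ = W₂ := inf_eq_left.mpr h2
        have : W₁ ⊓ B₁.orthogonal W₁ = W₁ := by
          apply Submodule.eq_of_le_of_finrank_le inf_le_left
          rw [hdim, hrk, hrad₂]
        exact inf_eq_left.mp this
      obtain ⟨u₁, hu₁W, v₁, hv₁W, huv₁⟩ := pair_in hiso
      obtain ⟨u₂, hu₂W, v₂, hv₂W, huv₂⟩ := pair_in hiso₂
      obtain ⟨hc₁, Qnd₁, Qalt₁, Qrk₁⟩ := setup alt₁ nd₁ huv₁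
      obtain ⟨hc₂, Qnd₂, Qalt₂, Qrk₂⟩ := setup alt₂ nd₂ huv₂
      have hdec₁ := decomp_top alt₁ huv₁ hu₁W hv₁W
      have hdec₂ := decomp_top alt₂ huv₂ hu₂W hv₂W
      have e₁ : finrank ℝ ↥W₁
          = 2 + finrank ℝ ↥(W₁ ⊓ B₁.orthogonal (span ℝ {u₁, v₁})) := by
        have h := Submodule.finrank_sup_add_finrank_inf_eq
          (span ℝ {u₁, v₁} : Submodule ℝ V₁) (W₁ ⊓ B₁.orthogonal (span ℝ {u₁, v₁}))
        have hb : (span ℝ {u₁, v₁} : Submodule ℝ V₁)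
            ⊓ (W₁ ⊓ B₁.orthogonal (span ℝ {u₁, v₁})) = ⊥ :=
          (hc₁.disjoint.mono_right inf_le_right).eq_bot
        rw [← hdec₁, hb, finrank_bot, add_zero, finrank_pair alt₁ huv₁] at h
        omega
      have e₂ : finrank ℝ ↥W₂
          = 2 + finrank ℝ ↥(W₂ ⊓ B₂.orthogonal (span ℝ {u₂, v₂})) := by
        have h := Submodule.finrank_sup_add_finrank_inf_eq
          (span ℝ {u₂, v₂} : Submodule ℝ V₂) (W₂ ⊓ B₂.orthogonal (span ℝ {u₂, v₂}))
        have hb : (span ℝ {u₂, v₂} : Submodule ℝ V₂)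
            ⊓ (W₂ ⊓ B₂.orthogonal (span ℝ {u₂, v₂})) = ⊥ :=
          (hc₂.disjoint.mono_right inf_le_right).eq_bot
        rw [← hdec₂, hb, finrank_bot, add_zero, finrank_pair alt₂ huv₂] at h
        omega
      have hdim'' : finrank ℝ ↥(comap (B₁.orthogonal (span ℝ {u₁, v₁})).subtype
            (W₁ ⊓ B₁.orthogonal (span ℝ {u₁, v₁})))
          = finrank ℝ ↥(comap (B₂.orthogonal (span ℝ {u₂, v₂})).subtype
            (W₂ ⊓ B₂.orthogonal (span ℝ {u₂, v₂}))) := by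
        rw [(comapSubtypeEquivOfLe (q := B₁.orthogonal (span ℝ {u₁, v₁}))
            (p := W₁ ⊓ B₁.orthogonal (span ℝ {u₁, v₁})) inf_le_right).finrank_eq,
          (comapSubtypeEquivOfLe (q := B₂.orthogonal (span ℝ {u₂, v₂}))
            (p := W₂ ⊓ B₂.orthogonal (span ℝ {u₂, v₂})) inf_le_right).finrank_eq]
        omega
      have hrk'' : finrank ℝ ↥((comap (B₁.orthogonal (span ℝ {u₁, v₁})).subtype
              (W₁ ⊓ B₁.orthogonal (span ℝ {u₁, v₁}))) ⊓
            (B₁.restrict (B₁.orthogonal (span ℝ {u₁, v₁}))).orthogonal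
              (comap (B₁.orthogonal (span ℝ {u₁, v₁})).subtype
                (W₁ ⊓ B₁.orthogonal (span ℝ {u₁, v₁}))))
          = finrank ℝ ↥((comap (B₂.orthogonal (span ℝ {u₂, v₂})).subtype
              (W₂ ⊓ B₂.orthogonal (span ℝ {u₂, v₂}))) ⊓
            (B₂.restrict (B₂.orthogonal (span ℝ {u₂, v₂}))).orthogonal
              (comap (B₂.orthogonal (span ℝ {u₂, v₂})).subtype
                (W₂ ⊓ B₂.orthogonal (span ℝ {u₂, v₂})))) := by
        rw [rad_comap alt₁ huv₁ hu₁W hv₁W, rad_comap alt₂ huv₂ hu₂W hv₂W,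
          (comapSubtypeEquivOfLe (q := B₁.orthogonal (span ℝ {u₁, v₁}))
            (rad_le_orthP hu₁W hv₁W)).finrank_eq,
          (comapSubtypeEquivOfLe (q := B₂.orthogonal (span ℝ {u₂, v₂}))
            (rad_le_orthP hu₂W hv₂W)).finrank_eq]
        exact hrk
      obtain ⟨f, hf, hfmap⟩ := IH (N - 2) (by omega) ↥(B₁.orthogonal (span ℝ {u₁, v₁}))
        ↥(B₂.orthogonal (span ℝ {u₂, v₂}))
        (B₁.restrict _) (B₂.restrict _) Qalt₁ Qalt₂ Qnd₁ Qnd₂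
        (by rw [Qrk₁, hN₁]) (by rw [Qrk₂, hN₂]) _ _ hdim'' hrk''
      refine glue alt₁ alt₂ huv₁ huv₂ hc₁ hc₂ f hf hfmap hdec₁ hdec₂ ?_
      intro g hgu hgv
      rw [Submodule.map_span, Set.image_insert_eq, Set.image_singleton]
      simp only [LinearEquiv.coe_coe, hgu, hgv]

/-- `Sp(V,ω)` acts transitively on subspaces of fixed dimension and fixed symplectic
rank: if `dim W₁ = dim W₂` and `dim (W₁ ∩ W₁^⊥) = dim (W₂ ∩ W₂^⊥)`, there is a
symplectic automorphism `h` with `h(W₁) = W₂`. -/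
theorem stmt_2 (n : ℕ) (W₁ W₂ : Submodule ℝ ((Fin n ⊕ Fin n) → ℝ))
    (hdim : Module.finrank ℝ ↥W₁ = Module.finrank ℝ ↥W₂)
    (hrk : Module.finrank ℝ ↥(W₁ ⊓ (stdSymplectic n).orthogonal W₁) =
      Module.finrank ℝ ↥(W₂ ⊓ (stdSymplectic n).orthogonal W₂)) :
    ∃ h : ((Fin n ⊕ Fin n) → ℝ) ≃ₗ[ℝ] ((Fin n ⊕ Fin n) → ℝ),
      (∀ v w, stdSymplectic n (h v) (h w) = stdSymplectic n v w) ∧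
      W₁.map (h : ((Fin n ⊕ Fin n) → ℝ) →ₗ[ℝ] ((Fin n ⊕ Fin n) → ℝ)) = W₂ := by
  obtain ⟨g, hpres, hmap⟩ := witt (finrank ℝ ((Fin n ⊕ Fin n) → ℝ))
    ((Fin n ⊕ Fin n) → ℝ) ((Fin n ⊕ Fin n) → ℝ) (stdSymplectic n) (stdSymplectic n)
    (std_isAlt n) (std_isAlt n) (std_nondeg n) (std_nondeg n) rfl rfl W₁ W₂ hdim hrk
  exact ⟨g, hpres, hmap⟩
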